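/- Let (b_n) be a nondecreasing sequence of integers with b_n ≥ 2 and b_n → ∞, let X = ∏_n ℤ(b_n), let u_n be the character of X given by u_n(ω) = exp(2πi a_n / b_n) for ω = (a_n) ∈ X, and let G_u = s_u(X) = {ω ∈ X : u_n(ω) → 1} be equipped with the metric ρ(x, y) = d(x, y) + sup_n |u_n(x) − u_n(y)|. Then every continuous character χ of (G_u, ρ) is given by an element of the direct sum G = ⨁_n ℤ(b_n): writing χ as a sequence (c_n) ∈ ∏_n ℤ(b_n) via χ(ω) = exp(2πi Σ_n c_n a_n / b_n) on G, one has c_n = 0 for all sufficiently large n. Thus the character group of G_u is algebraically isomorphic to ⨁_n ℤ(b_n). -/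

import Mathlib

open Filter Topology

/-- The value at `ω ∈ X = ∏ n, ℤ(b n)` of the character given by the generator of the `n`-th
summand of `⨁ n, ℤ(b n)`: `u_n(ω) = exp(2πi a_n / b_n)` where `a_n = (ω n).val`. -/
noncomputable def prodChar (b : ℕ → ℕ) (m : ℕ) (ω : (n : ℕ) → ZMod (b n)) : ℂ :=
  Complex.exp (2 * Real.pi * Complex.I * ((ω m).val : ℂ) / (b m : ℂ))

/-- The standard metric of `X = ∏ n, ℤ(b n)`: `d(x, y) = 2⁻ⁿ` where `n` is the first index
at which the coordinates of `x` and `y` differ (and `d(x, x) = 0`). -/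
noncomputable def prodStdDist (b : ℕ → ℕ) (x y : (n : ℕ) → ZMod (b n)) : ℝ :=
  open scoped Classical in
  if x = y then 0 else (2 : ℝ)⁻¹ ^ sInf {n : ℕ | x n ≠ y n}

/-- The subgroup `s_u(X) = {ω : u_n(ω) → 1}` of `X = ∏ n, ℤ(b n)`. -/
def sUX (b : ℕ → ℕ) : Set ((n : ℕ) → ZMod (b n)) :=
  {ω | Tendsto (fun n => prodChar b n ω) atTop (𝓝 1)}

/-- The Polish group metric `ρ(x, y) = d(x, y) + sup_n |u_n(x) − u_n(y)|` on `s_u(X)`. -/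
noncomputable def prodRho (b : ℕ → ℕ) (x y : (n : ℕ) → ZMod (b n)) : ℝ :=
  prodStdDist b x y + ⨆ n : ℕ, ‖prodChar b n x - prodChar b n y‖

section helpers
variable {b : ℕ → ℕ}

lemma valZero (hb : ∀ n, 2 ≤ b n) (n : ℕ) : (0 : ZMod (b n)).val = 0 := by
  haveI : NeZero (b n) := ⟨by have := hb n; omega⟩
  exact ZMod.val_zero

lemma valLt (hb : ∀ n, 2 ≤ b n) {n : ℕ} (x : ZMod (b n)) : x.val < b n := by
  haveI : NeZero (b n) := ⟨by have := hb n; omega⟩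
  exact ZMod.val_lt x

lemma valPos (hb : ∀ n, 2 ≤ b n) {n : ℕ} {x : ZMod (b n)} (hx : x ≠ 0) : 1 ≤ x.val := by
  haveI : NeZero (b n) := ⟨by have := hb n; omega⟩
  have : x.val ≠ 0 := fun h => hx ((ZMod.val_eq_zero x).mp h)
  omega

lemma natCastVal (hb : ∀ n, 2 ≤ b n) {n : ℕ} (x : ZMod (b n)) :
    ((x.val : ZMod (b n))) = x := by
  haveI : NeZero (b n) := ⟨by have := hb n; omega⟩
  exact ZMod.natCast_rightInverse x

lemma valCastOfLt (hb : ∀ n, 2 ≤ b n) {n v : ℕ} (hv : v < b n) :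
    ((v : ZMod (b n))).val = v := ZMod.val_cast_of_lt hv

lemma prodChar_zero (hb : ∀ n, 2 ≤ b n) (m : ℕ) :
    prodChar b m (0 : (n : ℕ) → ZMod (b n)) = 1 := by
  have : ((0 : (n : ℕ) → ZMod (b n)) m) = 0 := rfl
  simp [prodChar, this, valZero hb]

lemma prodChar_of_zero (hb : ∀ n, 2 ≤ b n) {ω : (n : ℕ) → ZMod (b n)} {m : ℕ}
    (h : ω m = 0) : prodChar b m ω = 1 := by
  simp [prodChar, h, valZero hb]

lemma mem_sUX_of_finite (hb : ∀ n, 2 ≤ b n) {ω : (n : ℕ) → ZMod (b n)}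
    (h : {n | ω n ≠ 0}.Finite) : ω ∈ sUX b := by
  obtain ⟨N, hN⟩ := h.bddAbove
  refine Tendsto.congr' ?_ (tendsto_const_nhds (x := (1 : ℂ)))
  filter_upwards [eventually_gt_atTop N] with n hn
  have hz : ω n = 0 := by
    by_contra hc
    exact absurd (hN hc) (by omega)
  exact (prodChar_of_zero hb hz).symm

lemma zero_mem_sUX (hb : ∀ n, 2 ≤ b n) : (0 : (n : ℕ) → ZMod (b n)) ∈ sUX b :=
  mem_sUX_of_finite hb (by simp)

lemma stdDist_le (hb : ∀ n, 2 ≤ b n) {x y : (n : ℕ) → ZMod (b n)} {n₀ : ℕ}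
    (h : ∀ m < n₀, x m = y m) : prodStdDist b x y ≤ (2 : ℝ)⁻¹ ^ n₀ := by
  classical
  unfold prodStdDist
  split
  · positivity
  · rename_i hxy
    have hne : {n : ℕ | x n ≠ y n}.Nonempty := by
      rw [Set.nonempty_def]
      by_contra hc
      push_neg at hc
      exact hxy (funext fun m => by_contra fun hm => (hc m) hm)
    have hinf : n₀ ≤ sInf {n : ℕ | x n ≠ y n} := by
      refine le_csInf hne fun m hm => ?_
      by_contra hc
      exact hm (h m (by omega))
    exact pow_le_pow_of_le_one (by norm_num) (by norm_num) hinf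

end helpers

lemma expI_abs_sub_one_le {r : ℝ} (hr : |r| ≤ 1) :
    ‖Complex.exp ((r : ℂ) * Complex.I) - 1‖ ≤ 2 * |r| := by
  have h : ‖(r : ℂ) * Complex.I‖ = |r| := by
    rw [norm_mul, Complex.norm_I, mul_one, Complex.norm_real, Real.norm_eq_abs]
  have := Complex.norm_exp_sub_one_le (x := (r : ℂ) * Complex.I) (by rwa [h])
  rwa [h] at this

lemma expI_shift (r : ℝ) :
    Complex.exp (((r + 2 * Real.pi : ℝ) : ℂ) * Complex.I) =
      Complex.exp ((r : ℂ) * Complex.I) := by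
  push_cast
  rw [add_mul, Complex.exp_add, Complex.exp_two_pi_mul_I, mul_one]

lemma charForm (v bn : ℕ) :
    2 * Real.pi * Complex.I * (v : ℂ) / (bn : ℂ) =
      ((2 * Real.pi * v / bn : ℝ) : ℂ) * Complex.I := by
  push_cast
  ring

/-- Key per-coordinate construction. -/
lemma coord_construct (bn cv : ℕ) (θ : ℝ) (hbn : 2 ≤ bn) (hcv1 : 1 ≤ cv) (hcv2 : cv < bn)
    (hθ : 0 < θ) (hθ2 : θ ≤ 1/4) :
    ∃ (v : ℕ) (z : ℤ), 1 ≤ v ∧ v < bn ∧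
      θ ≤ (cv * v : ℝ)/bn - z ∧ (cv * v : ℝ)/bn - z ≤ θ + ((min cv (bn - cv) : ℕ) : ℝ)/bn ∧
      ∀ M : ℝ, θ/((min cv (bn - cv) : ℕ) : ℝ) + 1/bn ≤ M → 2*Real.pi*M ≤ 1 →
        ‖Complex.exp (2*Real.pi*Complex.I*(v:ℂ)/(bn:ℂ)) - 1‖ ≤ 4*Real.pi*M := by
  obtain ⟨d, hd⟩ : ∃ d, d = min cv (bn - cv) := ⟨_, rfl⟩
  rw [← hd]
  have hd1 : 1 ≤ d := by omega
  have hd2 : 2 * d ≤ bn := by omega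
  have hbnR : (0:ℝ) < bn := by positivity
  have hdR : (0:ℝ) < d := by exact_mod_cast hd1
  have hdR1 : (1:ℝ) ≤ d := by exact_mod_cast hd1
  have hbnR2 : (2:ℝ) ≤ bn := by exact_mod_cast hbn
  set a : ℕ := ⌈θ * bn / d⌉₊ with ha
  have hquot_pos : 0 < θ * bn / d := by positivity
  have ha1 : 1 ≤ a := Nat.one_le_iff_ne_zero.mpr (by
    simp only [ha, ne_eq, Nat.ceil_eq_zero, not_le]
    exact hquot_pos)
  have ha1R : (1:ℝ) ≤ a := by exact_mod_cast ha1
  have ha_ge : θ * bn / d ≤ a := Nat.le_ceil _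
  have ha_lt : (a : ℝ) < θ * bn / d + 1 := Nat.ceil_lt_add_one (le_of_lt hquot_pos)
  have hdlt : (d:ℝ) ≤ bn := by exact_mod_cast (by omega : d ≤ bn)
  have hqle : θ * bn / d ≤ bn / 4 := by
    rw [div_le_div_iff₀ hdR (by norm_num)]
    nlinarith
  have halt_bn : a < bn := by
    have h1 : (a:ℝ) < bn := by nlinarith
    exact_mod_cast h1
  have hτ1 : θ ≤ (a:ℝ) * d / bn := by
    rw [le_div_iff₀ hbnR]
    calc θ * bn = (θ * bn / d) * d := by field_simp
    _ ≤ a * d := by nlinarith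
  have hτ2 : (a:ℝ) * d / bn ≤ θ + (d:ℝ)/bn := by
    rw [div_le_iff₀ hbnR]
    have h1 : (a:ℝ) * d < (θ * bn / d + 1) * d := by nlinarith
    have h2 : (θ * bn / d + 1) * d = θ * bn + d := by field_simp
    have h3 : (θ + (d:ℝ)/bn) * bn = θ * bn + d := by field_simp
    linarith
  have hab : (a:ℝ)/bn ≤ θ/d + 1/bn := by
    rw [div_le_iff₀ hbnR]
    have h1 : (θ/d + 1/bn) * bn = (θ/d) * bn + 1 := by field_simp
    have h2 : (θ/d) * bn = θ * bn / d := by ring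
    linarith
  have habs : ∀ M : ℝ, θ/d + 1/bn ≤ M → 2*Real.pi*M ≤ 1 →
      ‖Complex.exp (((- (2*Real.pi*a/bn) : ℝ) : ℂ) * Complex.I) - 1‖ ≤ 4*Real.pi*M
      ∧ ‖Complex.exp (((2*Real.pi*a/bn : ℝ) : ℂ) * Complex.I) - 1‖ ≤ 4*Real.pi*M := by
    intro M hM1 hM2
    have hM0 : (0:ℝ) ≤ M := le_trans (by positivity) hM1
    have habM : (a:ℝ)/bn ≤ M := le_trans hab hM1
    have hpi := Real.pi_pos
    have key : 2*Real.pi*((a:ℝ)/bn) ≤ 2*Real.pi*M :=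
      mul_le_mul_of_nonneg_left habM (by positivity)
    have hr : |(2*Real.pi*a/bn : ℝ)| ≤ 1 := by
      rw [abs_of_nonneg (by positivity)]
      have h2 : 2*Real.pi*(a:ℝ)/bn = 2*Real.pi*((a:ℝ)/bn) := by ring
      linarith
    have hb1 := expI_abs_sub_one_le hr
    have hb2 := expI_abs_sub_one_le (r := -(2*Real.pi*a/bn)) (by rwa [abs_neg])
    rw [abs_neg] at hb2
    have hfin : 2 * |(2*Real.pi*a/bn : ℝ)| ≤ 4*Real.pi*M := by
      rw [abs_of_nonneg (by positivity)]
      have h2 : 2*Real.pi*(a:ℝ)/bn = 2*Real.pi*((a:ℝ)/bn) := by ring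
      linarith
    exact ⟨le_trans hb2 hfin, le_trans hb1 hfin⟩
  by_cases hcase : 2 * cv ≤ bn
  · -- unflipped: v = a, z = 0, d = cv
    have hdcv : d = cv := by omega
    have e : (cv:ℝ) * (a:ℝ) / bn - (((0:ℤ)):ℝ) = (a:ℝ) * d / bn := by
      rw [hdcv]; push_cast; ring
    refine ⟨a, 0, ha1, halt_bn, ?_, ?_, ?_⟩
    · rw [e]; exact hτ1
    · rw [e]; exact hτ2
    · intro M hM1 hM2
      rw [charForm]
      exact (habs M hM1 hM2).2
  · -- flipped: v = bn - a, z = cv - a, d = bn - cv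
    have hdcv : d = bn - cv := by omega
    have hanat : a ≤ bn := le_of_lt halt_bn
    have e : (cv:ℝ) * (((bn - a : ℕ)):ℝ) / bn - (((cv:ℤ) - (a:ℤ) : ℤ):ℝ) = (a:ℝ) * d / bn := by
      rw [hdcv]
      push_cast [Nat.cast_sub hanat, Nat.cast_sub (le_of_lt hcv2)]
      field_simp
      ring
    refine ⟨bn - a, (cv : ℤ) - (a : ℤ), by omega, by omega, ?_, ?_, ?_⟩
    · rw [e]; exact hτ1
    · rw [e]; exact hτ2
    · intro M hM1 hM2
      rw [charForm]
      have e2 : (2 * Real.pi * (((bn - a : ℕ)):ℝ) / bn) = (-(2*Real.pi*a/bn)) + 2*Real.pi := by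
        push_cast [Nat.cast_sub hanat]
        field_simp
        ring
      rw [e2, expI_shift]
      exact (habs M hM1 hM2).1

def psingle (b : ℕ → ℕ) (n : ℕ) (x : ZMod (b n)) : (m : ℕ) → ZMod (b m) := Pi.single n x

lemma psingle_same (b : ℕ → ℕ) (n : ℕ) (x : ZMod (b n)) : psingle b n x n = x := by
  unfold psingle; simp

lemma psingle_ne (b : ℕ → ℕ) {n m : ℕ} (h : m ≠ n) (x : ZMod (b n)) : psingle b n x m =
    0 := by
  unfold psingle
  exact Pi.single_eq_of_ne (M := fun m => ZMod (b m)) h x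


set_option maxHeartbeats 3200000 in
/-- Every continuous character `χ` of `G_u = (s_u(X), ρ)` (a circle-valued homomorphism on
`s_u(X)`, continuous for the metric `ρ`) is given by an element of the direct sum
`⨁ n, ℤ(b n)`: writing `χ` on the finitely supported elements as
`χ(ω) = exp(2πi Σ_n c_n a_n / b_n)` for a sequence `(c_n) ∈ ∏ n, ℤ(b n)`, one has `c_n = 0`
for all sufficiently large `n`. Hence the character group of `G_u` is algebraically
isomorphic to `⨁ n, ℤ(b n)`. -/
theorem character_of_Gu_eq_directSum_eval
    (b : ℕ → ℕ) (hmono : Monotone b) (hb : ∀ n, 2 ≤ b n)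
    (htends : Tendsto b atTop atTop)
    (χ : ((n : ℕ) → ZMod (b n)) → ℂ)
    (hnorm : ∀ ω ∈ sUX b, ‖χ ω‖ = 1)
    (hhom : ∀ x ∈ sUX b, ∀ y ∈ sUX b, χ (x + y) = χ x * χ y)
    (hcont : ∀ x ∈ sUX b, ∀ ε > (0 : ℝ), ∃ δ > (0 : ℝ), ∀ y ∈ sUX b,
      prodRho b x y < δ → ‖χ y - χ x‖ < ε) :
    ∃ c : (n : ℕ) → ZMod (b n), (∃ N : ℕ, ∀ n ≥ N, c n = 0) ∧
      ∀ ω : (n : ℕ) → ZMod (b n), {n : ℕ | ω n ≠ 0}.Finite →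
        χ ω = Complex.exp (2 * Real.pi * Complex.I *
          ((∑ᶠ n : ℕ, (((c n).val : ℝ) * ((ω n).val : ℝ) / (b n : ℝ)) : ℝ) : ℂ)) := by
  classical
  have hbC : ∀ n, ((b n : ℂ)) ≠ 0 := fun n => Nat.cast_ne_zero.mpr (by have := hb n; omega)
  have hsingle_fin : ∀ (n : ℕ) (x : ZMod (b n)), {m | psingle b n x m ≠ 0}.Finite := by
    intro n x
    apply Set.Finite.subset (Set.finite_singleton n)
    intro m hm
    simp only [Set.mem_setOf_eq] at hm
    by_contra h
    exact hm (psingle_ne b h x)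
  have h0fin : ({m | (0 : (n : ℕ) → ZMod (b n)) m ≠ 0}).Finite := by simp
  have hχ0 : χ 0 = 1 := by
    have h0 := mem_sUX_of_finite hb h0fin
    have hh := hhom 0 h0 0 h0
    rw [add_zero] at hh
    have h1 : ‖χ 0‖ = 1 := hnorm 0 h0
    have hne : χ 0 ≠ 0 := by intro h; rw [h] at h1; simp at h1
    have h2 : χ 0 * χ 0 = χ 0 * 1 := by rw [mul_one, ← hh]
    exact (mul_left_cancel₀ hne h2)
  have hsmul_fin : ∀ (k : ℕ) (x : (n : ℕ) → ZMod (b n)), {m | x m ≠ 0}.Finite →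
      {m | (k • x) m ≠ 0}.Finite := by
    intro k x hx
    apply hx.subset
    intro m hm
    simp only [Set.mem_setOf_eq, Pi.smul_apply] at hm ⊢
    intro hx0
    rw [hx0, smul_zero] at hm
    exact hm rfl
  have hχpow : ∀ (x : (n : ℕ) → ZMod (b n)), {m | x m ≠ 0}.Finite → ∀ k : ℕ,
      χ (k • x) = χ x ^ k := by
    intro x hx k
    induction k with
    | zero => simp [hχ0]
    | succ k ih =>
      rw [succ_nsmul, hhom _ (mem_sUX_of_finite hb (hsmul_fin k x hx)) _ (mem_sUX_of_finite hb hx),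
        ih, pow_succ]
  have hsingle1 : ∀ (n : ℕ) (x : ZMod (b n)),
      χ (psingle b n x) = χ (psingle b n (1 : ZMod (b n))) ^ x.val := by
    intro n x
    have hdec : psingle b n x = x.val • psingle b n (1 : ZMod (b n)) := by
      funext m
      by_cases h : m = n
      · subst h
        simp only [Pi.smul_apply, psingle_same, nsmul_eq_mul, mul_one]
        exact (natCastVal hb x).symm
      · simp [psingle_ne b h, Pi.smul_apply]
    rw [hdec, hχpow _ (hsingle_fin n 1) x.val]
  have hroot : ∀ n : ℕ, (χ (psingle b n (1 : ZMod (b n)))) ^ (b n) = 1 := by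
    intro n
    have hz : (b n) • psingle b n (1 : ZMod (b n)) = 0 := by
      funext m
      by_cases h : m = n
      · subst h
        simp only [Pi.smul_apply, psingle_same, nsmul_eq_mul, mul_one, ZMod.natCast_self,
          Pi.zero_apply]
      · simp [psingle_ne b h, Pi.smul_apply]
    rw [← hχpow _ (hsingle_fin n 1) (b n), hz, hχ0]
  have hc : ∀ n : ℕ, ∃ cn : ZMod (b n), χ (psingle b n (1 : ZMod (b n))) =
      Complex.exp (2 * Real.pi * Complex.I * ((cn.val : ℕ) : ℂ) / (b n : ℂ)) := by
    intro n
    haveI : NeZero (b n) := ⟨by have := hb n; omega⟩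
    obtain ⟨i, hi, hexp⟩ := (Complex.isPrimitiveRoot_exp (b n)
      (by have := hb n; omega)).eq_pow_of_pow_eq_one (hroot n)
    refine ⟨(i : ZMod (b n)), ?_⟩
    rw [ZMod.val_cast_of_lt hi, ← hexp, ← Complex.exp_nat_mul]
    congr 1
    ring
  choose c hcval using hc
  have hsingleExp : ∀ (n : ℕ) (x : ZMod (b n)), χ (psingle b n x) =
      Complex.exp (2 * Real.pi * Complex.I *
        ((((c n).val : ℝ) * (x.val : ℝ) / (b n : ℝ) : ℝ) : ℂ)) := by
    intro n x
    rw [hsingle1 n x, hcval n, ← Complex.exp_nat_mul]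
    congr 1
    push_cast
    field_simp
  have hprod : ∀ s : Finset ℕ, ∀ ω : (n : ℕ) → ZMod (b n), (∀ m ∉ s, ω m = 0) →
      χ ω = Complex.exp (2 * Real.pi * Complex.I *
        ((∑ n ∈ s, (((c n).val : ℝ) * ((ω n).val : ℝ) / (b n : ℝ)) : ℝ) : ℂ)) := by
    intro s
    induction s using Finset.induction_on with
    | empty =>
      intro ω hω
      have : ω = 0 := funext fun m => hω m (by simp)
      rw [this, hχ0]
      simp
    | @insert a s ha ih =>
      intro ω hω
      set ω' := Function.update ω a 0 with hω'def
      have hsup' : ∀ m ∉ s, ω' m = 0 := by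
        intro m hm
        by_cases h : m = a
        · subst h; simp [ω']
        · have hmm : m ∉ insert a s := by simp [h, hm]
          simp [ω', Function.update_of_ne h, hω m hmm]
      have hfin' : {m | ω' m ≠ 0}.Finite := by
        apply Set.Finite.subset s.finite_toSet
        intro m hm
        simp only [Set.mem_setOf_eq] at hm
        by_contra h
        exact hm (hsup' m h)
      have hdec : ω = psingle b a (ω a) + ω' := by
        funext m
        by_cases h : m = a
        · subst h; simp [ω', psingle_same]
        · simp [ω', psingle_ne b h, Function.update_of_ne h]
      have hstep : χ ω = χ (psingle b a (ω a)) * χ ω' := by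
        conv_lhs => rw [hdec]
        exact hhom _ (mem_sUX_of_finite hb (hsingle_fin a (ω a))) _ (mem_sUX_of_finite hb hfin')
      have hcongr : ∀ n ∈ s, (((c n).val : ℝ) * ((ω' n).val : ℝ) / (b n : ℝ)) =
          (((c n).val : ℝ) * ((ω n).val : ℝ) / (b n : ℝ)) := by
        intro n hn
        have hna : n ≠ a := fun h => ha (h ▸ hn)
        rw [show ω' n = ω n from Function.update_of_ne hna 0 ω]
      have hsum : (∑ n ∈ insert a s, (((c n).val : ℝ) * ((ω n).val : ℝ) / (b n : ℝ))) =
          ((c a).val : ℝ) * ((ω a).val : ℝ) / (b a : ℝ) +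
            ∑ n ∈ s, (((c n).val : ℝ) * ((ω' n).val : ℝ) / (b n : ℝ)) := by
        rw [Finset.sum_insert ha]
        congr 1
        exact (Finset.sum_congr rfl hcongr).symm
      rw [hstep, ih ω' hsup', hsingleExp a (ω a), ← Complex.exp_add]
      congr 1
      rw [hsum]
      push_cast
      ring
  have hformula : ∀ ω : (n : ℕ) → ZMod (b n), {n : ℕ | ω n ≠ 0}.Finite →
      χ ω = Complex.exp (2 * Real.pi * Complex.I *
        ((∑ᶠ n : ℕ, (((c n).val : ℝ) * ((ω n).val : ℝ) / (b n : ℝ)) : ℝ) : ℂ)) := by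
    intro ω hfin
    have hω : ∀ m ∉ hfin.toFinset, ω m = 0 := by
      intro m hm
      simpa using hm
    have hsub : (Function.support fun n => (((c n).val : ℝ) * ((ω n).val : ℝ) / (b n : ℝ)))
        ⊆ ↑hfin.toFinset := by
      intro n hn
      simp only [Function.mem_support] at hn
      simp only [Finset.coe_sort_coe, Set.Finite.coe_toFinset, Set.mem_setOf_eq]
      intro h
      rw [h, valZero hb] at hn
      simp at hn
    rw [finsum_eq_sum_of_support_subset _ hsub]
    exact hprod hfin.toFinset ω hω
  refine ⟨c, ?_, hformula⟩
  by_contra hfin_c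
  push_neg at hfin_c
  obtain ⟨δ, hδpos, hδ⟩ := hcont 0 (zero_mem_sUX hb) (1/2) (by norm_num)
  have hpi := Real.pi_pos
  have hpi4 := Real.pi_le_four
  have hbR : ∀ m, (2:ℝ) ≤ ((b m : ℕ) : ℝ) := fun m => by exact_mod_cast hb m
  have hbRpos : ∀ m, (0:ℝ) < ((b m : ℕ) : ℝ) := fun m => lt_of_lt_of_le (by norm_num) (hbR m)
  set t : ℝ := min (δ/(32*Real.pi)) (1/100) with ht
  have ht0 : 0 < t := lt_min (by positivity) (by norm_num)
  have ht100 : t ≤ 1/100 := min_le_right _ _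
  have htδ : t ≤ δ/(32*Real.pi) := min_le_left _ _
  set K : ℕ := ⌈1/(4*t)⌉₊ with hK
  have hK1 : 1 ≤ K := Nat.one_le_iff_ne_zero.mpr (by
    simp only [hK, ne_eq, Nat.ceil_eq_zero, not_le]
    positivity)
  have hKR : (0:ℝ) < K := by exact_mod_cast hK1
  have hKt1 : 1/4 ≤ (K:ℝ) * t := by
    have h1 : 1/(4*t) ≤ (K:ℝ) := Nat.le_ceil _
    rw [div_le_iff₀ (by positivity)] at h1
    nlinarith
  have hKt2 : (K:ℝ) * t ≤ 1/4 + t := by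
    have h1 : (K:ℝ) < 1/(4*t) + 1 := Nat.ceil_lt_add_one (by positivity)
    have h2 : (1/(4*t)) * t = 1/4 := by field_simp
    nlinarith
  set sthr : ℝ := t/(2*K) with hsthr
  have hs0 : 0 < sthr := by positivity
  have hKs : (K:ℝ) * sthr = t/2 := by
    rw [hsthr]
    field_simp
  set B₀ : ℝ := max (max (4*Real.pi/(sthr*δ)) (16*Real.pi/δ)) (max (Real.pi/sthr) (4*Real.pi))
    with hB₀
  have hev1 : ∀ᶠ n in atTop, B₀ ≤ ((b n : ℕ) : ℝ) :=
    (tendsto_natCast_atTop_atTop.comp htends).eventually_ge_atTop B₀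
  have hev2 : ∀ᶠ n in atTop, ((2:ℝ)⁻¹)^n ≤ δ/4 := by
    have h2 : Tendsto (fun n : ℕ => ((2:ℝ)⁻¹)^n) atTop (𝓝 0) :=
      tendsto_pow_atTop_nhds_zero_of_lt_one (by norm_num) (by norm_num)
    exact (h2.eventually_lt_const (by positivity)).mono fun n hn => le_of_lt hn
  obtain ⟨N₂, hN₂⟩ := Filter.eventually_atTop.mp (hev1.and hev2)
  have hBcomp : ∀ m : ℕ, N₂ ≤ m →
      (4*Real.pi/(sthr*δ) ≤ ((b m : ℕ) : ℝ) ∧ 16*Real.pi/δ ≤ ((b m : ℕ) : ℝ)) ∧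
      (Real.pi/sthr ≤ ((b m : ℕ) : ℝ) ∧ 4*Real.pi ≤ ((b m : ℕ) : ℝ)) := by
    intro m hm
    have hB := (hN₂ m hm).1
    exact ⟨⟨le_trans (le_trans (le_max_left _ _) (le_max_left _ _)) hB,
        le_trans (le_trans (le_max_right _ _) (le_max_left _ _)) hB⟩,
      ⟨le_trans (le_trans (le_max_left _ _) (le_max_right _ _)) hB,
        le_trans (le_trans (le_max_right _ _) (le_max_right _ _)) hB⟩⟩
  -- the common killing lemma
  have hkill : ∀ ω : (n : ℕ) → ZMod (b n), {n | ω n ≠ 0}.Finite →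
      prodStdDist b 0 ω ≤ δ/4 →
      (∀ m, ‖prodChar b m 0 - prodChar b m ω‖ ≤ δ/2) →
      (∃ z : ℤ, 1/4 ≤ (∑ᶠ n : ℕ, (((c n).val : ℝ) * ((ω n).val : ℝ) / (b n : ℝ))) - z ∧
        (∑ᶠ n : ℕ, (((c n).val : ℝ) * ((ω n).val : ℝ) / (b n : ℝ))) - z ≤ 3/4) → False := by
    intro ω hfin hstd hsup hex
    obtain ⟨z, hz1, hz2⟩ := hex
    set S : ℝ := ∑ᶠ n : ℕ, (((c n).val : ℝ) * ((ω n).val : ℝ) / (b n : ℝ)) with hS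
    have hχω : χ ω = Complex.exp (((2*Real.pi*S : ℝ) : ℂ) * Complex.I) := by
      rw [hformula ω hfin, ← hS]
      congr 1
      push_cast
      ring
    have hre : (χ ω).re = Real.cos (2*Real.pi*S) := by
      rw [hχω]; exact Complex.exp_ofReal_mul_I_re _
    have hcos : Real.cos (2*Real.pi*S) ≤ 0 := by
      have harg : 2*Real.pi*S = 2*Real.pi*(S - z) + (z : ℝ) * (2*Real.pi) := by ring
      rw [harg, Real.cos_add_int_mul_two_pi]
      apply Real.cos_nonpos_of_pi_div_two_le_of_le
      · nlinarith
      · nlinarith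
    have hρ : prodRho b 0 ω < δ := by
      have hsup' : (⨆ m : ℕ, ‖prodChar b m 0 - prodChar b m ω‖) ≤ δ/2 :=
        ciSup_le hsup
      have hle : prodRho b 0 ω ≤ δ/4 + δ/2 := add_le_add hstd hsup'
      linarith
    have hclose := hδ ω (mem_sUX_of_finite hb hfin) hρ
    rw [hχ0] at hclose
    have h1 : (1:ℝ) ≤ ‖χ ω - 1‖ := by
      have habs := Complex.abs_re_le_norm (χ ω - 1)
      have hre1 : (χ ω - 1).re = Real.cos (2*Real.pi*S) - 1 := by
        simp [Complex.sub_re, hre]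
      rw [hre1] at habs
      have h2 : 1 ≤ |Real.cos (2*Real.pi*S) - 1| := by
        rw [abs_of_nonpos (by linarith)]
        linarith
      linarith
    linarith
  -- dichotomy
  by_cases hA : ∀ N : ℕ, ∃ n, N ≤ n ∧ (c n ≠ 0 ∧
      sthr * ((b n : ℕ) : ℝ) ≤ ((min (c n).val (b n - (c n).val) : ℕ) : ℝ))
  · -- Case A : one large coordinate
    obtain ⟨n, hn, hcn, hdn⟩ := hA N₂
    have hcv1 : 1 ≤ (c n).val := valPos hb hcn
    have hcv2 : (c n).val < b n := valLt hb _
    obtain ⟨v, z, hv1, hv2, hτ1, hτ2, hexp⟩ :=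
      coord_construct (b n) ((c n).val) (1/4) (hb n) hcv1 hcv2 (by norm_num) (le_refl _)
    obtain ⟨ω, hω⟩ : ∃ ω' : (m : ℕ) → ZMod (b m), ω' = psingle b n ((v : ZMod (b n))) :=
      ⟨_, rfl⟩
    have hωn : (ω n).val = v := by
      rw [hω, psingle_same]
      exact valCastOfLt hb hv2
    have hωm : ∀ m, m ≠ n → ω m = 0 := fun m hm => by rw [hω]; exact psingle_ne b hm _
    have hfinω : {m | ω m ≠ 0}.Finite := by rw [hω]; exact hsingle_fin n _
    have hSval : (∑ᶠ m : ℕ, (((c m).val : ℝ) * ((ω m).val : ℝ) / (b m : ℝ)))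
        = ((c n).val : ℝ) * (v : ℝ) / (b n : ℝ) := by
      rw [finsum_eq_single _ n (fun m hm => by rw [hωm m hm, valZero hb]; simp), hωn]
    have hdd1 : 1 ≤ min (c n).val (b n - (c n).val) := by omega
    have hdd2 : 2 * min (c n).val (b n - (c n).val) ≤ b n := by omega
    have hddpos : (0:ℝ) < ((min (c n).val (b n - (c n).val) : ℕ) : ℝ) := by
      exact_mod_cast hdd1
    have hbm := hBcomp n hn
    have hbnpos := hbRpos n
    have hbne : ((b n : ℕ):ℝ) ≠ 0 := ne_of_gt hbnpos
    have hsne : sthr ≠ 0 := ne_of_gt hs0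
    -- the sup bound
    have hM1 : (1/4 : ℝ)/((min (c n).val (b n - (c n).val) : ℕ) : ℝ) + 1/((b n : ℕ):ℝ)
        ≤ 1/(4*sthr*((b n : ℕ):ℝ)) + 1/((b n : ℕ):ℝ) := by
      have h1 : (1/4 : ℝ)/((min (c n).val (b n - (c n).val) : ℕ) : ℝ)
          ≤ 1/(4*sthr*((b n : ℕ):ℝ)) := by
        rw [div_le_div_iff₀ hddpos (mul_pos (mul_pos (by norm_num) hs0) hbnpos)]
        have he : (1/4 : ℝ) * (4*sthr*((b n : ℕ):ℝ)) = sthr*((b n : ℕ):ℝ) := by ring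
        rw [he, one_mul]
        exact hdn
      linarith
    have hM2 : 2*Real.pi*(1/(4*sthr*((b n : ℕ):ℝ)) + 1/((b n : ℕ):ℝ)) ≤ 1 := by
      have e1 : Real.pi ≤ sthr * ((b n : ℕ):ℝ) := by
        have h := (div_le_iff₀ hs0).mp hbm.2.1
        rw [mul_comm sthr]
        exact h
      have e2 : 4*Real.pi ≤ ((b n : ℕ):ℝ) := hbm.2.2
      have expand : 2*Real.pi*(1/(4*sthr*((b n : ℕ):ℝ)) + 1/((b n : ℕ):ℝ))
          = Real.pi/(sthr*((b n : ℕ):ℝ))/2 + 2*Real.pi/((b n : ℕ):ℝ) := by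
        field_simp [hsne, hbne]
        ring
      rw [expand]
      have e3 : Real.pi/(sthr*((b n : ℕ):ℝ)) ≤ 1 := by
        rw [div_le_one (mul_pos hs0 hbnpos)]
        exact e1
      have e4 : 2*Real.pi/((b n : ℕ):ℝ) ≤ 1/2 := by
        rw [div_le_iff₀ hbnpos]
        linarith [e2]
      linarith
    have hMδ : 4*Real.pi*(1/(4*sthr*((b n : ℕ):ℝ)) + 1/((b n : ℕ):ℝ)) ≤ δ/2 := by
      have e1 : 4*Real.pi ≤ ((b n : ℕ):ℝ) * (sthr*δ) :=
        (div_le_iff₀ (mul_pos hs0 hδpos)).mp hbm.1.1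
      have e2 : 16*Real.pi ≤ ((b n : ℕ):ℝ) * δ := (div_le_iff₀ hδpos).mp hbm.1.2
      have expand : 4*Real.pi*(1/(4*sthr*((b n : ℕ):ℝ)) + 1/((b n : ℕ):ℝ))
          = Real.pi/(sthr*((b n : ℕ):ℝ)) + 4*Real.pi/((b n : ℕ):ℝ) := by
        field_simp [hsne, hbne]
      rw [expand]
      have e3 : Real.pi/(sthr*((b n : ℕ):ℝ)) ≤ δ/4 := by
        rw [div_le_iff₀ (mul_pos hs0 hbnpos)]
        ring_nf at e1 ⊢
        linarith
      have e4 : 4*Real.pi/((b n : ℕ):ℝ) ≤ δ/4 := by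
        rw [div_le_iff₀ hbnpos]
        ring_nf at e2 ⊢
        linarith
      linarith
    have hexpbound := hexp _ hM1 hM2
    refine hkill ω hfinω ?_ ?_ ⟨z, ?_, ?_⟩
    · -- std dist
      refine le_trans (stdDist_le hb (n₀ := n) fun m hm => ?_) (hN₂ n hn).2
      rw [hωm m (by omega)]
      rfl
    · intro m
      by_cases hmn : m = n
      · subst hmn
        have hchar : prodChar b m ω = Complex.exp (2*Real.pi*Complex.I*((v : ℕ):ℂ)/((b m : ℕ):ℂ)) := by
          rw [prodChar, hωn]
        rw [hchar, prodChar_zero hb]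
        have hflip : ‖1 - Complex.exp (2*Real.pi*Complex.I*((v : ℕ):ℂ)/((b m : ℕ):ℂ))‖
            = ‖Complex.exp (2*Real.pi*Complex.I*((v : ℕ):ℂ)/((b m : ℕ):ℂ)) - 1‖ := by
          rw [← norm_neg, neg_sub]
        rw [hflip]
        exact le_trans hexpbound hMδ
      · rw [prodChar_zero hb, prodChar_of_zero hb (hωm m hmn)]
        simp only [sub_self, norm_zero]
        positivity
    · rw [hSval]
      exact hτ1
    · rw [hSval]
      have hup : (1/4 : ℝ) + ((min (c n).val (b n - (c n).val) : ℕ) : ℝ)/((b n : ℕ):ℝ) ≤ 3/4 := by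
        have h1 : ((min (c n).val (b n - (c n).val) : ℕ) : ℝ)/((b n : ℕ):ℝ) ≤ 1/2 := by
          rw [div_le_iff₀ hbnpos]
          have h2 : 2 * ((min (c n).val (b n - (c n).val) : ℕ) : ℝ) ≤ ((b n : ℕ):ℝ) := by
            exact_mod_cast hdd2
          linarith
        linarith
      exact le_trans hτ2 hup
  · -- Case B : accumulation of small coordinates
    push_neg at hA
    obtain ⟨N₁, hN₁⟩ := hA
    have hfreq : ∀ N : ℕ, ∃ n > N, (max N₁ N₂ ≤ n ∧ c n ≠ 0) := by
      intro N
      obtain ⟨n, hn1, hn2⟩ := hfin_c (max (N+1) (max N₁ N₂))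
      exact ⟨n, by omega, by omega, hn2⟩
    obtain ⟨φ, hφmono, hφP⟩ := Nat.exists_strictMono_subsequence hfreq
    have hdata : ∀ n : ℕ, ∃ (v : ℕ) (z : ℤ), c n ≠ 0 →
        (1 ≤ v ∧ v < b n ∧
          t ≤ (((c n).val : ℝ) * (v : ℝ))/((b n : ℕ) : ℝ) - (z : ℝ) ∧
          (((c n).val : ℝ) * (v : ℝ))/((b n : ℕ) : ℝ) - (z : ℝ)
            ≤ t + ((min (c n).val (b n - (c n).val) : ℕ) : ℝ)/((b n : ℕ) : ℝ) ∧
          ∀ M : ℝ, t/((min (c n).val (b n - (c n).val) : ℕ) : ℝ) + 1/((b n : ℕ) : ℝ) ≤ M →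
            2*Real.pi*M ≤ 1 →
            ‖Complex.exp (2*Real.pi*Complex.I*(v:ℂ)/((b n : ℕ):ℂ)) - 1‖
              ≤ 4*Real.pi*M) := by
      intro n
      by_cases h : c n ≠ 0
      · obtain ⟨v, z, h1, h2, h3, h4, h5⟩ :=
          coord_construct (b n) ((c n).val) t (hb n) (valPos hb h) (valLt hb _) ht0
            (le_trans ht100 (by norm_num))
        exact ⟨v, z, fun _ => ⟨h1, h2, h3, h4, h5⟩⟩
      · exact ⟨0, 0, fun hc => absurd hc h⟩
    choose V Z hVZ using hdata
    set SS : Finset ℕ := (Finset.range K).image φ with hSS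
    have hcard : SS.card = K := by
      rw [hSS, Finset.card_image_of_injective _ hφmono.injective, Finset.card_range]
    obtain ⟨ω, hω⟩ : ∃ ω' : (m : ℕ) → ZMod (b m),
        ω' = fun m => if m ∈ SS then ((V m : ZMod (b m))) else 0 := ⟨_, rfl⟩
    have hmemP : ∀ m ∈ SS, (max N₁ N₂ ≤ m ∧ c m ≠ 0) := by
      intro m hm
      rw [hSS] at hm
      obtain ⟨k, -, rfl⟩ := Finset.mem_image.mp hm
      exact hφP k
    have hωin : ∀ m ∈ SS, ω m = ((V m : ZMod (b m))) := fun m hm => by rw [hω]; simp [hm]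
    have hωout : ∀ m ∉ SS, ω m = 0 := fun m hm => by rw [hω]; simp [hm]
    have hVd := fun (m : ℕ) (hm : m ∈ SS) => hVZ m (hmemP m hm).2
    have hωval : ∀ m ∈ SS, (ω m).val = V m := by
      intro m hm
      rw [hωin m hm]
      exact valCastOfLt hb (hVd m hm).2.1
    have hfinω : {m | ω m ≠ 0}.Finite := by
      apply Set.Finite.subset SS.finite_toSet
      intro m hm
      simp only [Set.mem_setOf_eq] at hm
      simp only [Finset.coe_sort_coe, Finset.mem_coe]
      by_contra h
      exact hm (hωout m h)
    have hsub : (Function.support fun m => (((c m).val : ℝ) * ((ω m).val : ℝ) / (b m : ℝ)))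
        ⊆ ↑SS := by
      intro m hm
      simp only [Function.mem_support] at hm
      simp only [Finset.coe_sort_coe, Finset.mem_coe]
      by_contra h
      rw [hωout m h, valZero hb] at hm
      simp at hm
    have hSsum : (∑ᶠ m : ℕ, (((c m).val : ℝ) * ((ω m).val : ℝ) / (b m : ℝ)))
        = ∑ m ∈ SS, (((c m).val : ℝ) * ((ω m).val : ℝ) / (b m : ℝ)) :=
      finsum_eq_sum_of_support_subset _ hsub
    have hτlow : ∀ m ∈ SS, t ≤ (((c m).val : ℝ) * ((ω m).val : ℝ) / (b m : ℝ)) - (Z m : ℝ) := by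
      intro m hm
      have h3 := (hVd m hm).2.2.1
      rw [hωval m hm]
      exact h3
    have hτhigh : ∀ m ∈ SS,
        (((c m).val : ℝ) * ((ω m).val : ℝ) / (b m : ℝ)) - (Z m : ℝ) ≤ t + sthr := by
      intro m hm
      have h4 := (hVd m hm).2.2.2.1
      rw [hωval m hm]
      have hN1m : N₁ ≤ m := le_trans (le_max_left _ _) (hmemP m hm).1
      have hsmall := hN₁ m hN1m (hmemP m hm).2
      have hbmpos := hbRpos m
      have hdiv : ((min (c m).val (b m - (c m).val) : ℕ) : ℝ)/((b m : ℕ) : ℝ) ≤ sthr := by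
        rw [div_le_iff₀ hbmpos]
        rw [mul_comm]
        exact le_of_lt (by rwa [mul_comm] at hsmall)
      linarith
    refine hkill ω hfinω ?_ ?_ ⟨∑ m ∈ SS, Z m, ?_, ?_⟩
    · -- std dist
      have hstd0 : ∀ m < φ 0, (0 : (k : ℕ) → ZMod (b k)) m = ω m := by
        intro m hm
        have hout : m ∉ SS := by
          intro hin
          rw [hSS] at hin
          obtain ⟨k, -, rfl⟩ := Finset.mem_image.mp hin
          have : φ 0 ≤ φ k := hφmono.monotone (Nat.zero_le k)
          omega
        rw [hωout m hout]
        rfl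
      have hN2φ : N₂ ≤ φ 0 := le_trans (le_max_right _ _) (hφP 0).1
      refine le_trans (stdDist_le hb hstd0) ?_
      have hmono2 : ((2:ℝ)⁻¹) ^ (φ 0) ≤ ((2:ℝ)⁻¹) ^ N₂ :=
        pow_le_pow_of_le_one (by norm_num) (by norm_num) hN2φ
      exact le_trans hmono2 (hN₂ N₂ le_rfl).2
    · -- sup bound
      intro m
      by_cases hm : m ∈ SS
      · have hN2m : N₂ ≤ m := le_trans (le_max_right _ _) (hmemP m hm).1
        have hbm := hBcomp m hN2m
        have hbmpos := hbRpos m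
        have hcm := (hmemP m hm).2
        have hcv1 : 1 ≤ (c m).val := valPos hb hcm
        have hcv2 : (c m).val < b m := valLt hb _
        have hdd1 : 1 ≤ min (c m).val (b m - (c m).val) := by omega
        have hdd1R : (1:ℝ) ≤ ((min (c m).val (b m - (c m).val) : ℕ) : ℝ) := by
          exact_mod_cast hdd1
        have hM1 : t/((min (c m).val (b m - (c m).val) : ℕ) : ℝ) + 1/((b m : ℕ) : ℝ)
            ≤ t + 1/((b m : ℕ) : ℝ) := by
          have := div_le_self (le_of_lt ht0) hdd1R
          linarith
        have hπt : 2*Real.pi*t ≤ 1/2 := by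
          have h1 : Real.pi * t ≤ 4 * t := mul_le_mul_of_nonneg_right hpi4 (le_of_lt ht0)
          linarith
        have e4 : 2*Real.pi/((b m : ℕ):ℝ) ≤ 1/2 := by
          rw [div_le_iff₀ hbmpos]
          linarith [hbm.2.2]
        have hM2 : 2*Real.pi*(t + 1/((b m : ℕ) : ℝ)) ≤ 1 := by
          have expand : 2*Real.pi*(t + 1/((b m : ℕ) : ℝ))
              = 2*Real.pi*t + 2*Real.pi/((b m : ℕ):ℝ) := by
            field_simp
          rw [expand]
          linarith
        have hMδ : 4*Real.pi*(t + 1/((b m : ℕ) : ℝ)) ≤ δ/2 := by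
          have h1 : 4*Real.pi*t ≤ 4*Real.pi*(δ/(32*Real.pi)) :=
            mul_le_mul_of_nonneg_left htδ (by positivity)
          have h2 : 4*Real.pi*(δ/(32*Real.pi)) = δ/8 := by
            field_simp
            ring
          have h3 : 4*Real.pi/((b m : ℕ):ℝ) ≤ δ/4 := by
            rw [div_le_iff₀ hbmpos]
            have h4 := (div_le_iff₀ hδpos).mp hbm.1.2
            linarith
          have expand : 4*Real.pi*(t + 1/((b m : ℕ) : ℝ))
              = 4*Real.pi*t + 4*Real.pi/((b m : ℕ):ℝ) := by
            field_simp
          rw [expand]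
          linarith
        have hbound := (hVd m hm).2.2.2.2 _ hM1 hM2
        have hchar : prodChar b m ω
            = Complex.exp (2*Real.pi*Complex.I*((V m : ℕ):ℂ)/((b m : ℕ):ℂ)) := by
          rw [prodChar, hωval m hm]
        rw [prodChar_zero hb, hchar]
        have hflip : ‖1 - Complex.exp (2*Real.pi*Complex.I*((V m : ℕ):ℂ)/((b m : ℕ):ℂ))‖
            = ‖Complex.exp (2*Real.pi*Complex.I*((V m : ℕ):ℂ)/((b m : ℕ):ℂ)) - 1‖ := by
          rw [← norm_neg, neg_sub]
        rw [hflip]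
        exact le_trans hbound hMδ
      · rw [prodChar_zero hb, prodChar_of_zero hb (hωout m hm)]
        simp only [sub_self, norm_zero]
        positivity
    · -- lower bound on S - z
      rw [hSsum]
      push_cast
      rw [← Finset.sum_sub_distrib]
      calc (1/4 : ℝ) ≤ (K:ℝ)*t := hKt1
      _ = (SS.card : ℝ) * t := by rw [hcard]
      _ = ∑ _m ∈ SS, t := by rw [Finset.sum_const, nsmul_eq_mul]
      _ ≤ ∑ m ∈ SS, ((((c m).val : ℝ) * ((ω m).val : ℝ) / (b m : ℝ)) - (Z m : ℝ)) :=
        Finset.sum_le_sum hτlow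
    · -- upper bound on S - z
      rw [hSsum]
      push_cast
      rw [← Finset.sum_sub_distrib]
      calc ∑ m ∈ SS, ((((c m).val : ℝ) * ((ω m).val : ℝ) / (b m : ℝ)) - (Z m : ℝ))
          ≤ ∑ _m ∈ SS, (t + sthr) := Finset.sum_le_sum hτhigh
      _ = (SS.card : ℝ) * (t + sthr) := by rw [Finset.sum_const, nsmul_eq_mul]
      _ = (K:ℝ)*t + (K:ℝ)*sthr := by rw [hcard]; ring
      _ ≤ 3/4 := by
        rw [hKs]
        linarith [hKt2, ht100]
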